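/- arXiv:1807.06914 — 9 statements merged into one kernel-verified Lean document; each statement's English description precedes it below -/
import Mathlib

section
/- In any finite simple graph G, an independent set S is maximum if and only if every independent set A disjoint from S can be matched into S (i.e., there exists a matching pairing each vertex of A with a distinct neighbor in S). -/
open SimpleGraph

variable {V : Type*} [Fintype V] [DecidableEq V]

/-- A set of vertices is independent: no two of its vertices are adjacent. -/
def isIndep (G : SimpleGraph V) (S : Finset V) : Prop :=
  ∀ ⦃a⦄, a ∈ S → ∀ ⦃b⦄, b ∈ S → ¬ G.Adj a b

/-- The independence number `α(G)`. -/
noncomputable def indepNum (G : SimpleGraph V) : ℕ :=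
  sSup {n | ∃ S : Finset V, isIndep G S ∧ S.card = n}

/-- A maximum independent set: an independent set of size `α(G)`. -/
def isMaxIndep (G : SimpleGraph V) (S : Finset V) : Prop :=
  isIndep G S ∧ S.card = _root_.indepNum G

/-- `G` has two disjoint maximum independent sets. -/
def hasTwoDisjointMaxIndep (G : SimpleGraph V) : Prop :=
  ∃ S₁ S₂ : Finset V, isMaxIndep G S₁ ∧ isMaxIndep G S₂ ∧ Disjoint S₁ S₂

/-- A matching: a set of edges of `G`, pairwise sharing no vertex. -/
def isMatchingF (G : SimpleGraph V) (M : Finset (Sym2 V)) : Prop :=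
  (∀ e ∈ M, e ∈ G.edgeSet) ∧
  (∀ e ∈ M, ∀ f ∈ M, e ≠ f → ∀ v : V, v ∈ e → v ∉ f)

/-- The matching number `μ(G)`. -/
noncomputable def matchNum (G : SimpleGraph V) : ℕ :=
  sSup {n | ∃ M : Finset (Sym2 V), isMatchingF G M ∧ M.card = n}

/-- A shedding vertex: for every independent set `S` of `G − N[v]` there is a
neighbor `u` of `v` with `S ∪ {u}` independent. -/
def IsShedding (G : SimpleGraph V) (v : V) : Prop :=
  ∀ S : Finset V, isIndep G S → (∀ w ∈ S, w ≠ v ∧ ¬ G.Adj v w) →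
    ∃ u, G.Adj v u ∧ isIndep G (insert u S)

/-- A perfect matching of `G`: a matching covering every vertex. -/
def hasPerfectMatchingF (G : SimpleGraph V) : Prop :=
  ∃ M : Finset (Sym2 V), isMatchingF G M ∧ ∀ v : V, ∃ e ∈ M, v ∈ e

/-- The disjoint union of `k` copies of `K₂`. -/
def copiesK2 (k : ℕ) : SimpleGraph (Fin k × Fin 2) :=
  SimpleGraph.fromRel (fun p q => p.1 = q.1)

lemma indep_card_le_indepNum (G : SimpleGraph V) (T : Finset V) (hT : isIndep G T) :
    T.card ≤ _root_.indepNum G := by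
  apply le_csSup
  · exact ⟨Fintype.card V, fun n ⟨U, _, hU⟩ => hU ▸ Finset.card_le_univ U⟩
  · exact ⟨T, hT, rfl⟩


/-- An independent set `S` is maximum iff every independent set disjoint from `S`
can be matched into `S`. -/
theorem stmt0 (G : SimpleGraph V) (S : Finset V) (hS : isIndep G S) :
    S.card = _root_.indepNum G ↔
      ∀ A : Finset V, isIndep G A → Disjoint A S →
        ∃ f : V → V, Set.InjOn f ↑A ∧ ∀ a ∈ A, f a ∈ S ∧ G.Adj a (f a) := by
  classical
  constructor
  · intro hmax A hA hdisj
    -- Hall's theorem on the subtype of A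
    set t : ↥A → Finset V := fun a => S.filter (fun s => G.Adj a.1 s) with ht
    have hall : ∀ s : Finset ↥A, s.card ≤ (s.biUnion t).card := by
      intro s
      set N : Finset V := s.biUnion t with hN
      have hNS : N ⊆ S := by
        intro x hx
        simp only [hN, Finset.mem_biUnion, ht, Finset.mem_filter] at hx
        obtain ⟨a, _, hx, _⟩ := hx
        exact hx
      set B : Finset V := s.image Subtype.val with hB
      have hBcard : B.card = s.card := Finset.card_image_of_injective _ Subtype.val_injective
      have hBA : B ⊆ A := by
        intro x hx
        simp only [hB, Finset.mem_image] at hx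
        obtain ⟨a, _, rfl⟩ := hx
        exact a.2
      -- (S \ N) ∪ B is independent
      have hindep : isIndep G ((S \ N) ∪ B) := by
        intro x hx y hy hadj
        have key : ∀ b ∈ B, ∀ z ∈ S \ N, ¬ G.Adj b z := by
          intro b hb z hz habz
          simp only [hB, Finset.mem_image] at hb
          obtain ⟨a, ha, rfl⟩ := hb
          have : z ∈ N := by
            simp only [hN, Finset.mem_biUnion]
            exact ⟨a, ha, by simp [ht, (Finset.mem_sdiff.mp hz).1, habz]⟩
          exact (Finset.mem_sdiff.mp hz).2 this
        rcases Finset.mem_union.mp hx with hx' | hx' <;>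
          rcases Finset.mem_union.mp hy with hy' | hy'
        · exact hS (Finset.mem_sdiff.mp hx').1 (Finset.mem_sdiff.mp hy').1 hadj
        · exact key y hy' x hx' hadj.symm
        · exact key x hx' y hy' hadj
        · exact hA (hBA hx') (hBA hy') hadj
      have hdisjBN : Disjoint (S \ N) B := by
        apply Finset.disjoint_left.mpr
        intro x hx hxB
        exact Finset.disjoint_left.mp hdisj (hBA hxB) (Finset.mem_sdiff.mp hx).1
      have hcard : ((S \ N) ∪ B).card = (S.card - N.card) + B.card := by
        rw [Finset.card_union_of_disjoint hdisjBN, Finset.card_sdiff_of_subset hNS]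
      have hle : ((S \ N) ∪ B).card ≤ _root_.indepNum G := indep_card_le_indepNum G _ hindep
      have hNle : N.card ≤ S.card := Finset.card_le_card hNS
      rw [hcard, hBcard] at hle
      rw [← hmax] at hle
      omega
    obtain ⟨f, hfinj, hf⟩ := (Finset.all_card_le_biUnion_card_iff_exists_injective t).mp hall
    refine ⟨fun a => if h : a ∈ A then f ⟨a, h⟩ else a, ?_, ?_⟩
    · intro x hx y hy hxy
      simp only [Finset.mem_coe] at hx hy
      simp only [dif_pos hx, dif_pos hy] at hxy
      exact Subtype.ext_iff.mp (hfinj hxy)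
    · intro a ha
      simp only [dif_pos ha]
      have := hf ⟨a, ha⟩
      simp only [ht, Finset.mem_filter] at this
      exact ⟨this.1, this.2⟩
  · intro h
    refine le_antisymm (indep_card_le_indepNum G S hS) ?_
    rw [_root_.indepNum]
    refine csSup_le ⟨S.card, ⟨S, hS, rfl⟩⟩ ?_
    rintro n ⟨T, hT, rfl⟩
    have hAindep : isIndep G (T \ S) := fun a ha b hb =>
      hT (Finset.mem_sdiff.mp ha).1 (Finset.mem_sdiff.mp hb).1
    have hAdisj : Disjoint (T \ S) S := Finset.sdiff_disjoint
    obtain ⟨f, hfinj, hf⟩ := h (T \ S) hAindep hAdisj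
    -- T ∩ S and f(A) are disjoint subsets of S
    have himg : ((T \ S).image f) ⊆ S := by
      intro x hx
      obtain ⟨a, ha, rfl⟩ := Finset.mem_image.mp hx
      exact (hf a ha).1
    have hTS : (T ∩ S) ⊆ S := Finset.inter_subset_right
    have hdisj2 : Disjoint (T ∩ S) ((T \ S).image f) := by
      apply Finset.disjoint_left.mpr
      intro x hx hx'
      obtain ⟨a, ha, rfl⟩ := Finset.mem_image.mp hx'
      exact hT (Finset.mem_sdiff.mp ha).1 (Finset.mem_inter.mp hx).1 (hf a ha).2
    have hcardA : ((T \ S).image f).card = (T \ S).card := Finset.card_image_of_injOn hfinj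
    have : (T ∩ S).card + (T \ S).card ≤ S.card := by
      rw [← hcardA, ← Finset.card_union_of_disjoint hdisj2]
      exact Finset.card_le_card (Finset.union_subset hTS himg)
    have hTsplit := Finset.card_sdiff_add_card_inter T S
    omega
end

section
/- A graph G has two disjoint maximum independent sets if and only if there exists a matching M of size α(G) such that the subgraph of G induced by the vertices covered by M is bipartite. -/
open SimpleGraph

variable {V : Type*} [Fintype V] [DecidableEq V]

lemma indep_card_le (G : SimpleGraph V) {S : Finset V} (h : isIndep G S) :
    S.card ≤ _root_.indepNum G := by
  apply le_csSup
  · refine ⟨Fintype.card V, ?_⟩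
    rintro n ⟨T, _, rfl⟩
    simpa using T.card_le_univ
  · exact ⟨S, h, rfl⟩

lemma indep_subset (G : SimpleGraph V) {S T : Finset V} (hST : S ⊆ T)
    (h : isIndep G T) : isIndep G S :=
  fun _ ha _ hb => h (hST ha) (hST hb)

/-- `G` has two disjoint maximum independent sets iff there is a matching `M` of
size `α(G)` such that the subgraph induced by `V(M)` is bipartite. -/
theorem stmt3 (G : SimpleGraph V) :
    hasTwoDisjointMaxIndep G ↔
      ∃ M : Finset (Sym2 V), isMatchingF G M ∧ M.card = _root_.indepNum G ∧
        ∃ A B : Finset V, Disjoint A B ∧ isIndep G A ∧ isIndep G B ∧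
          ∀ v : V, (v ∈ A ∪ B ↔ ∃ e ∈ M, v ∈ e) := by
  classical
  constructor
  · rintro ⟨S₁, S₂, ⟨h1i, h1c⟩, ⟨h2i, h2c⟩, hdisj⟩
    set t : ↥S₁ → Finset V := fun x => S₂.filter (fun y => G.Adj ↑x y) with ht
    have hall : ∀ s : Finset ↥S₁, s.card ≤ (s.biUnion t).card := by
      intro s
      set N := s.biUnion t with hN
      set T := s.image Subtype.val with hT
      have hTS1 : T ⊆ S₁ := by
        intro a ha
        rw [hT, Finset.mem_image] at ha
        obtain ⟨x, _, rfl⟩ := ha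
        exact x.2
      have hNS2 : N ⊆ S₂ := by
        intro a ha
        rw [hN, Finset.mem_biUnion] at ha
        obtain ⟨x, _, hx⟩ := ha
        exact (Finset.mem_filter.mp hx).1
      have hUindep : isIndep G ((S₂ \ N) ∪ T) := by
        intro a ha b hb hadj
        rw [Finset.mem_union] at ha hb
        rcases ha with ha | ha <;> rcases hb with hb | hb
        · exact h2i (Finset.mem_sdiff.mp ha).1 (Finset.mem_sdiff.mp hb).1 hadj
        · -- a ∈ S₂ \ N, b ∈ T
          rw [hT, Finset.mem_image] at hb
          obtain ⟨x, hx, rfl⟩ := hb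
          have : a ∈ N := by
            rw [hN, Finset.mem_biUnion]
            exact ⟨x, hx, Finset.mem_filter.mpr ⟨(Finset.mem_sdiff.mp ha).1, hadj.symm⟩⟩
          exact (Finset.mem_sdiff.mp ha).2 this
        · rw [hT, Finset.mem_image] at ha
          obtain ⟨x, hx, rfl⟩ := ha
          have : b ∈ N := by
            rw [hN, Finset.mem_biUnion]
            exact ⟨x, hx, Finset.mem_filter.mpr ⟨(Finset.mem_sdiff.mp hb).1, hadj⟩⟩
          exact (Finset.mem_sdiff.mp hb).2 this
        · exact h1i (hTS1 ha) (hTS1 hb) hadj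
      have hcard : ((S₂ \ N) ∪ T).card ≤ S₂.card := by
        rw [h2c]; exact indep_card_le G hUindep
      have hdisjU : Disjoint (S₂ \ N) T :=
        Finset.disjoint_of_subset_right hTS1
          (Finset.disjoint_of_subset_left (Finset.sdiff_subset) hdisj.symm)
      have hsum : ((S₂ \ N) ∪ T).card = (S₂ \ N).card + T.card :=
        Finset.card_union_of_disjoint hdisjU
      have hsdiff : (S₂ \ N).card = S₂.card - N.card := Finset.card_sdiff_of_subset hNS2
      have hNle : N.card ≤ S₂.card := Finset.card_le_card hNS2
      have hTcard : T.card = s.card := Finset.card_image_of_injective _ Subtype.val_injective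
      omega
    obtain ⟨f, hfinj, hf⟩ := (Finset.all_card_le_biUnion_card_iff_exists_injective t).mp hall
    have hfS2 : ∀ x, f x ∈ S₂ := fun x => (Finset.mem_filter.mp (hf x)).1
    have hfadj : ∀ x : ↥S₁, G.Adj ↑x (f x) := fun x => (Finset.mem_filter.mp (hf x)).2
    have hkey : ∀ x : ↥S₁, ∀ y : V, y ∈ S₁ → f x ≠ y := by
      intro x y hy h
      exact (Finset.disjoint_left.mp hdisj hy) (h ▸ hfS2 x)
    set M : Finset (Sym2 V) := S₁.attach.image (fun x : ↥S₁ => s((x : V), f x)) with hM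
    set B : Finset V := S₁.attach.image (fun x : ↥S₁ => f x) with hB
    have hmemM : ∀ e, e ∈ M ↔ ∃ x : ↥S₁, e = s((x : V), f x) := by
      intro e
      rw [hM, Finset.mem_image]
      constructor
      · rintro ⟨x, _, rfl⟩; exact ⟨x, rfl⟩
      · rintro ⟨x, rfl⟩; exact ⟨x, Finset.mem_attach _ _, rfl⟩
    have hmemB : ∀ v, v ∈ B ↔ ∃ x : ↥S₁, v = f x := by
      intro v
      rw [hB, Finset.mem_image]
      constructor
      · rintro ⟨x, _, rfl⟩; exact ⟨x, rfl⟩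
      · rintro ⟨x, rfl⟩; exact ⟨x, Finset.mem_attach _ _, rfl⟩
    refine ⟨M, ⟨?_, ?_⟩, ?_, S₁, B, ?_, h1i, ?_, ?_⟩
    · intro e he
      obtain ⟨x, rfl⟩ := (hmemM e).mp he
      exact hfadj x
    · intro e he e' he' hne v hve hve'
      obtain ⟨x, rfl⟩ := (hmemM e).mp he
      obtain ⟨y, rfl⟩ := (hmemM e').mp he'
      rw [Sym2.mem_iff] at hve hve'
      rcases hve with rfl | rfl <;> rcases hve' with h | h
      · exact hne (by rw [Subtype.coe_injective h])
      · exact hkey y (↑x) x.2 h.symm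
      · exact hkey x (↑y) y.2 h
      · exact hne (by rw [hfinj h])
    · rw [hM, Finset.card_image_of_injOn, Finset.card_attach, h1c]
      intro x _ y _ h
      rw [Sym2.eq_iff] at h
      rcases h with ⟨h1, h2⟩ | ⟨h1, h2⟩
      · exact Subtype.ext h1
      · exact absurd h1.symm (hkey y (↑x) x.2)
    · refine Finset.disjoint_left.mpr fun a ha hb => ?_
      obtain ⟨x, rfl⟩ := (hmemB a).mp hb
      exact hkey x _ ha rfl
    · refine indep_subset G ?_ h2i
      intro a ha
      obtain ⟨x, rfl⟩ := (hmemB a).mp ha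
      exact hfS2 x
    · intro v
      constructor
      · intro hv
        rw [Finset.mem_union] at hv
        rcases hv with hv | hv
        · exact ⟨s(v, f ⟨v, hv⟩), (hmemM _).mpr ⟨⟨v, hv⟩, rfl⟩, by simp⟩
        · obtain ⟨x, rfl⟩ := (hmemB v).mp hv
          exact ⟨s((x : V), f x), (hmemM _).mpr ⟨x, rfl⟩, by simp⟩
      · rintro ⟨e, he, hve⟩
        obtain ⟨x, rfl⟩ := (hmemM e).mp he
        rw [Sym2.mem_iff] at hve
        rcases hve with rfl | rfl
        · exact Finset.mem_union_left _ x.2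
        · exact Finset.mem_union_right _ ((hmemB _).mpr ⟨x, rfl⟩)
  · rintro ⟨M, ⟨hMedge, hMdisj⟩, hMcard, A, B, hAB, hAi, hBi, hcov⟩
    have hunion : A ∪ B = M.biUnion (fun e => Finset.univ.filter (· ∈ e)) := by
      ext v
      rw [hcov v]
      simp [Finset.mem_biUnion]
    have hcard2 : ∀ e ∈ M, (Finset.univ.filter (· ∈ e)).card = 2 := by
      intro e he
      induction e using Sym2.ind with
      | _ x y =>
        have hxy : x ≠ y := (G.mem_edgeSet.mp (hMedge _ he)).ne
        have : Finset.univ.filter (· ∈ s(x, y)) = {x, y} := by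
          ext v; simp [Sym2.mem_iff]
        rw [this, Finset.card_insert_of_notMem (by simp [hxy]), Finset.card_singleton]
    have hbi : (M.biUnion (fun e => Finset.univ.filter (· ∈ e))).card = 2 * M.card := by
      rw [Finset.card_biUnion, Finset.sum_congr rfl hcard2, Finset.sum_const, smul_eq_mul,
        mul_comm]
      intro e he e' he' hne
      refine Finset.disjoint_left.mpr fun v hv hv' => ?_
      exact hMdisj e he e' he' hne v (Finset.mem_filter.mp hv).2 (Finset.mem_filter.mp hv').2
    have hABcard : A.card + B.card = 2 * _root_.indepNum G := by
      rw [← Finset.card_union_of_disjoint hAB, hunion, hbi, hMcard]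
    have hA := indep_card_le G hAi
    have hB := indep_card_le G hBi
    exact ⟨A, B, ⟨hAi, by omega⟩, ⟨hBi, by omega⟩, hAB⟩
end

section
/- Let G be a graph and S an independent set all of whose vertices are shedding vertices. Then the number of independent sets of G of cardinality |S| is at least 2^{|S|}. -/
open SimpleGraph

variable {V : Type*} [Fintype V] [DecidableEq V]

lemma key_lemma (G : SimpleGraph V) (S : Finset V) (hS : isIndep G S)
    (hshed : ∀ v ∈ S, IsShedding G v) :
    ∀ n : ℕ, ∀ A : Finset V, A ⊆ S → (S \ A).card = n →
      ∃ T : Finset V, isIndep G T ∧ T.card = S.card ∧ T ∩ S = A := by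
  intro n
  induction n with
  | zero =>
    intro A hA hcard
    have : S \ A = ∅ := Finset.card_eq_zero.mp hcard
    have hSA : S = A :=
      Finset.Subset.antisymm (Finset.sdiff_eq_empty_iff_subset.mp this) hA
    exact ⟨S, hS, rfl, by rw [Finset.inter_self, hSA]⟩
  | succ n ih =>
    intro A hA hcard
    have hne : (S \ A).Nonempty := by
      rw [← Finset.card_pos, hcard]; omega
    obtain ⟨v, hv⟩ := hne
    rw [Finset.mem_sdiff] at hv
    obtain ⟨hvS, hvA⟩ := hv
    have hA' : insert v A ⊆ S := Finset.insert_subset hvS hA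
    have hcard' : (S \ insert v A).card = n := by
      have : S \ insert v A = (S \ A).erase v := by
        ext x; simp [Finset.mem_sdiff, Finset.mem_erase]; tauto
      rw [this, Finset.card_erase_of_mem (Finset.mem_sdiff.mpr ⟨hvS, hvA⟩), hcard]
      omega
    obtain ⟨T', hT'ind, hT'card, hT'S⟩ := ih (insert v A) hA' hcard'
    have hvT' : v ∈ T' := by
      have : v ∈ T' ∩ S := hT'S ▸ Finset.mem_insert_self v A
      exact (Finset.mem_inter.mp this).1
    set W := T'.erase v with hW
    have hWsub : W ⊆ T' := Finset.erase_subset v T'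
    have hWind : isIndep G W := fun a ha b hb => hT'ind (hWsub ha) (hWsub hb)
    have hWcond : ∀ w ∈ W, w ≠ v ∧ ¬ G.Adj v w := by
      intro w hw
      rw [Finset.mem_erase] at hw
      exact ⟨hw.1, hT'ind hvT' (hWsub (Finset.mem_erase.mpr hw))⟩
    obtain ⟨u, hadj, huind⟩ := hshed v hvS W hWind hWcond
    have huW : u ∉ W := fun h => (hWcond u h).2 hadj
    have huS : u ∉ S := fun h => hS hvS h hadj
    refine ⟨insert u W, huind, ?_, ?_⟩
    · rw [Finset.card_insert_of_notMem huW, hW,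
        Finset.card_erase_of_mem hvT', hT'card]
      have : 1 ≤ S.card := Finset.card_pos.mpr ⟨v, hvS⟩
      omega
    · rw [Finset.insert_inter_of_notMem huS]
      have : W ∩ S = (T' ∩ S).erase v := by
        ext x
        simp only [hW, Finset.mem_erase, Finset.mem_inter]
        tauto
      rw [this, hT'S, Finset.erase_insert hvA]

/-- If `S` is an independent set of shedding vertices, then `G` has at least
`2^{|S|}` independent sets of cardinality `|S|`. -/
theorem stmt5 (G : SimpleGraph V) (S : Finset V) (hS : isIndep G S)
    (hshed : ∀ v ∈ S, IsShedding G v) :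
    2 ^ S.card ≤ {T : Finset V | isIndep G T ∧ T.card = S.card}.ncard := by
  classical
  have key : ∀ A ∈ S.powerset, ∃ T : Finset V,
      isIndep G T ∧ T.card = S.card ∧ T ∩ S = A := by
    intro A hA
    exact key_lemma G S hS hshed (S \ A).card A (Finset.mem_powerset.mp hA) rfl
  choose f hf1 hf2 hf3 using key
  have hfin : {T : Finset V | isIndep G T ∧ T.card = S.card}.Finite :=
    Set.toFinite _
  rw [Set.ncard_eq_toFinset_card' _]
  rw [← Finset.card_powerset]
  apply Finset.card_le_card_of_injOn (fun A => if h : A ∈ S.powerset then f A h else ∅)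
  · intro A hA
    have hA' : A ∈ S.powerset := by simpa using hA
    simp [hA', hf1 A hA', hf2 A hA']
  · intro A hA B hB hEq
    simp only [Finset.mem_coe] at hA hB
    simp only [dif_pos hA, dif_pos hB] at hEq
    rw [← hf3 A hA, ← hf3 B hB, hEq]
end

section
/- Let G be a graph and S an independent set all of whose vertices are shedding vertices. Then there exists a maximal independent set U of G disjoint from S, together with a matching from S into U. -/
open SimpleGraph

variable {V : Type*} [Fintype V] [DecidableEq V]

set_option linter.unusedSectionVars false in
lemma helper (G : SimpleGraph V) (S : Finset V) :
    ∀ W : Finset V, isIndep G (W ∪ S) → (∀ v ∈ S, IsShedding G v) → Disjoint W S →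
    ∃ f : V → V, Set.InjOn f ↑S ∧ (∀ s ∈ S, G.Adj s (f s)) ∧
      isIndep G (W ∪ S.image f) ∧ Disjoint (S.image f) (W ∪ S) := by
  induction S using Finset.induction_on with
  | empty =>
    intro W hind _ _
    exact ⟨id, by simp [Set.InjOn], by simp, by simpa using hind, by simp⟩
  | @insert v S' hvS' ih =>
    intro W hind hshed hdisj
    have hvW : v ∉ W := fun h => (Finset.disjoint_left.mp hdisj h) (Finset.mem_insert_self _ _)
    have hvmem : v ∈ W ∪ insert v S' := Finset.mem_union_right _ (Finset.mem_insert_self _ _)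
    have hsub : ∀ w ∈ W ∪ S', w ∈ W ∪ insert v S' := by
      intro w hw
      rcases Finset.mem_union.mp hw with h | h
      · exact Finset.mem_union_left _ h
      · exact Finset.mem_union_right _ (Finset.mem_insert_of_mem h)
    have hindWS' : isIndep G (W ∪ S') := fun a ha b hb => hind (hsub a ha) (hsub b hb)
    have hcond : ∀ w ∈ W ∪ S', w ≠ v ∧ ¬ G.Adj v w := by
      intro w hw
      constructor
      · rintro rfl
        rcases Finset.mem_union.mp hw with h | h
        · exact hvW h
        · exact hvS' h
      · exact hind hvmem (hsub w hw)
    obtain ⟨u, hadj, huind⟩ := hshed v (Finset.mem_insert_self _ _) (W ∪ S') hindWS' hcond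
    have huW : u ∉ W ∪ insert v S' := fun h => hind hvmem h hadj
    have huv : u ≠ v := fun h => G.irrefl (h ▸ hadj)
    -- apply IH with W' = insert u W
    have hind2 : isIndep G (insert u W ∪ S') := by
      intro a ha b hb
      have : ∀ x, x ∈ insert u W ∪ S' → x ∈ insert u (W ∪ S') := by
        intro x hx
        rcases Finset.mem_union.mp hx with h | h
        · rcases Finset.mem_insert.mp h with h | h
          · exact h ▸ Finset.mem_insert_self _ _
          · exact Finset.mem_insert_of_mem (Finset.mem_union_left _ h)
        · exact Finset.mem_insert_of_mem (Finset.mem_union_right _ h)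
      exact huind (this a ha) (this b hb)
    have hdisj2 : Disjoint (insert u W) S' := by
      rw [Finset.disjoint_left]
      intro a ha haS'
      rcases Finset.mem_insert.mp ha with rfl | h
      · exact huW (Finset.mem_union_right _ (Finset.mem_insert_of_mem haS'))
      · exact Finset.disjoint_left.mp hdisj h (Finset.mem_insert_of_mem haS')
    obtain ⟨f', hinj', hrep', hindep', hdisj'⟩ :=
      ih (insert u W) hind2 (fun w hw => hshed w (Finset.mem_insert_of_mem hw)) hdisj2
    have hneS' : ∀ x ∈ S', x ≠ v := fun x hx h => hvS' (by rw [← h]; exact hx)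
    refine ⟨Function.update f' v u, ?_, ?_, ?_, ?_⟩
    · -- InjOn
      intro a ha b hb hab
      simp only [Finset.coe_insert, Set.mem_insert_iff] at ha hb
      rcases ha with rfl | ha <;> rcases hb with rfl | hb
      · rfl
      · exfalso
        rw [Function.update_self, Function.update_of_ne (hneS' b hb) ] at hab
        exact Finset.disjoint_left.mp hdisj' (Finset.mem_image_of_mem f' hb)
          (Finset.mem_union_left _ (hab ▸ Finset.mem_insert_self u W))
      · exfalso
        rw [Function.update_self, Function.update_of_ne (hneS' a ha)] at hab
        exact Finset.disjoint_left.mp hdisj' (Finset.mem_image_of_mem f' ha)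
          (Finset.mem_union_left _ (hab ▸ Finset.mem_insert_self u W))
      · rw [Function.update_of_ne (hneS' a ha),
            Function.update_of_ne (hneS' b hb)] at hab
        exact hinj' ha hb hab
    · -- adjacency
      intro s hs
      rcases Finset.mem_insert.mp hs with rfl | hs
      · rw [Function.update_self]; exact hadj
      · rw [Function.update_of_ne (hneS' s hs)]; exact hrep' s hs
    · -- independence of W ∪ image
      have himg : (insert v S').image (Function.update f' v u) = insert u (S'.image f') := by
        rw [Finset.image_insert, Function.update_self]
        congr 1
        apply Finset.image_congr
        intro x hx
        exact Function.update_of_ne (hneS' x hx) _ _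
      rw [himg]
      intro a ha b hb
      have hmem : ∀ x, x ∈ W ∪ insert u (S'.image f') → x ∈ insert u W ∪ S'.image f' := by
        intro x hx
        rcases Finset.mem_union.mp hx with h | h
        · exact Finset.mem_union_left _ (Finset.mem_insert_of_mem h)
        · rcases Finset.mem_insert.mp h with rfl | h
          · exact Finset.mem_union_left _ (Finset.mem_insert_self _ _)
          · exact Finset.mem_union_right _ h
      exact hindep' (hmem a ha) (hmem b hb)
    · -- disjointness of image from W ∪ insert v S'
      have himg : (insert v S').image (Function.update f' v u) = insert u (S'.image f') := by
        rw [Finset.image_insert, Function.update_self]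
        congr 1
        apply Finset.image_congr
        intro x hx
        exact Function.update_of_ne (hneS' x hx) _ _
      rw [himg, Finset.disjoint_left]
      intro a ha haU
      rcases Finset.mem_insert.mp ha with rfl | ha
      · exact huW haU
      · rcases Finset.mem_union.mp haU with h | h
        · exact Finset.disjoint_left.mp hdisj'
            ha (Finset.mem_union_left _ (Finset.mem_insert_of_mem h))
        · rcases Finset.mem_insert.mp h with rfl | h
          · -- a = v ∈ image f' S' : contradiction since f' s = v adj s v but indep
            obtain ⟨s, hs, hfs⟩ := Finset.mem_image.mp ha
            exact hind hvmem (Finset.mem_union_right _ (Finset.mem_insert_of_mem hs))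
              (G.adj_symm (hfs ▸ hrep' s hs))
          · exact Finset.disjoint_left.mp hdisj' ha (Finset.mem_union_right _ h)


/-- If `S` is an independent set of shedding vertices, then there is a maximal
independent set `U` disjoint from `S` and a matching from `S` into `U`. -/
theorem stmt6 (G : SimpleGraph V) (S : Finset V) (hS : isIndep G S)
    (hshed : ∀ v ∈ S, IsShedding G v) :
    ∃ U : Finset V, isIndep G U ∧ (∀ v ∉ U, ¬ isIndep G (insert v U)) ∧
      Disjoint S U ∧
      ∃ f : V → V, Set.InjOn f ↑S ∧ ∀ s ∈ S, f s ∈ U ∧ G.Adj s (f s) := by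
  classical
  obtain ⟨f, hinj, hrep, hindep, hdisj⟩ :=
    helper G S ∅ (by simpa using hS) hshed (Finset.disjoint_left.mpr (by simp))
  simp only [Finset.empty_union] at hindep
  have hdisjS : Disjoint (S.image f) S :=
    hdisj.mono_right (Finset.subset_union_right)
  -- extend T = S.image f to a maximal independent set avoiding S
  set 𝒰 : Finset (Finset V) :=
    Finset.univ.filter (fun U => isIndep G U ∧ S.image f ⊆ U ∧ Disjoint U S) with h𝒰
  have hTmem : S.image f ∈ 𝒰 := by
    simp only [h𝒰, Finset.mem_filter, Finset.mem_univ, true_and]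
    exact ⟨hindep, le_refl _, hdisjS⟩
  obtain ⟨U, hU𝒰, hUmax⟩ := 𝒰.exists_max_image Finset.card ⟨_, hTmem⟩
  simp only [h𝒰, Finset.mem_filter, Finset.mem_univ, true_and] at hU𝒰
  obtain ⟨hUind, hTU, hUS⟩ := hU𝒰
  refine ⟨U, hUind, ?_, hUS.symm, f, hinj, fun s hs =>
    ⟨hTU (Finset.mem_image_of_mem f hs), hrep s hs⟩⟩
  intro v hv hvind
  by_cases hvS : v ∈ S
  · exact hvind (Finset.mem_insert_self _ _)
      (Finset.mem_insert_of_mem (hTU (Finset.mem_image_of_mem f hvS))) (hrep v hvS)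
  · have hmem : insert v U ∈ 𝒰 := by
      simp only [h𝒰, Finset.mem_filter, Finset.mem_univ, true_and]
      refine ⟨hvind, hTU.trans (Finset.subset_insert _ _), ?_⟩
      rw [Finset.disjoint_left]
      intro a ha haS
      rcases Finset.mem_insert.mp ha with rfl | ha
      · exact hvS haS
      · exact Finset.disjoint_left.mp hUS ha haS
    have := hUmax _ hmem
    rw [Finset.card_insert_of_notMem hv] at this
    omega
end

section
/- Every codominated vertex of a graph is a shedding vertex, where v is codominated if there exists a vertex u ≠ v with N[u] ⊆ N[v]. -/
open SimpleGraph

variable {V : Type*} [Fintype V] [DecidableEq V]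

/-- Every codominated vertex is a shedding vertex. -/
theorem stmt8 (G : SimpleGraph V) (v : V)
    (h : ∃ u : V, u ≠ v ∧ ∀ w : V, (w = u ∨ G.Adj u w) → (w = v ∨ G.Adj v w)) :
    IsShedding G v := by
  obtain ⟨u, hun, hsub⟩ := h
  intro S hS hSv
  have hvu : G.Adj v u := by
    rcases hsub u (Or.inl rfl) with h | h
    · exact absurd h hun
    · exact h
  refine ⟨u, hvu, ?_⟩
  intro a ha b hb hab
  have key : ∀ w ∈ S, ¬ G.Adj u w := by
    intro w hw hadj
    rcases hsub w (Or.inr hadj) with h | h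
    · exact (hSv w hw).1 h
    · exact (hSv w hw).2 h
  rcases Finset.mem_insert.1 ha with rfl | ha'
  · rcases Finset.mem_insert.1 hb with rfl | hb'
    · exact G.loopless.irrefl _ hab
    · exact key b hb' hab
  · rcases Finset.mem_insert.1 hb with rfl | hb'
    · exact key a ha' hab.symm
    · exact hS ha' hb' hab
end

section
/- In a bipartite graph, every shedding vertex is codominated; moreover, if a vertex x is codominated by a vertex y, then y is a leaf (has degree 1). -/
open SimpleGraph

variable {V : Type*} [Fintype V] [DecidableEq V]

lemma fin2_aux : ∀ a b d : Fin 2, a ≠ b → b ≠ d → a ≠ d → False := by decide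

/-- In a bipartite graph every shedding vertex is codominated; moreover, if `x`
is codominated by `y`, then `y` is a leaf. -/
theorem stmt9 (G : SimpleGraph V) (hbip : G.Colorable 2) :
    (∀ v : V, IsShedding G v →
        ∃ u : V, u ≠ v ∧ ∀ w : V, (w = u ∨ G.Adj u w) → (w = v ∨ G.Adj v w)) ∧
    (∀ x y : V, y ≠ x → (∀ w : V, (w = y ∨ G.Adj y w) → (w = x ∨ G.Adj x w)) →
        (G.neighborSet y).ncard = 1) := by

  classical
  obtain ⟨c⟩ := hbip
  constructor
  · intro v hv
    by_contra hno
    push_neg at hno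
    have key : ∀ u, G.Adj v u → ∃ w, G.Adj u w ∧ w ≠ v ∧ ¬ G.Adj v w := by
      intro u hu
      obtain ⟨w, hw1, hw2⟩ := hno u (fun h => G.loopless.irrefl v (h ▸ hu))
      rcases hw1 with rfl | hw1
      · exact absurd hu hw2.2
      · exact ⟨w, hw1, hw2.1, hw2.2⟩
    set f : V → V := fun u => if h : G.Adj v u then (key u h).choose else v with hf
    set S : Finset V := ((G.neighborSet v).toFinset).image f with hS
    have spec : ∀ w ∈ S, ∃ u, G.Adj v u ∧ G.Adj u w ∧ w ≠ v ∧ ¬ G.Adj v w := by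
      intro w hw
      simp only [hS, Finset.mem_image, Set.mem_toFinset, mem_neighborSet] at hw
      obtain ⟨u, hu, hfu⟩ := hw
      refine ⟨u, hu, ?_⟩
      have : f u = (key u hu).choose := by simp [hf, hu]
      rw [this] at hfu
      obtain ⟨h1, h2, h3⟩ := (key u hu).choose_spec
      exact hfu ▸ ⟨h1, h2, h3⟩
    have hcol : ∀ w ∈ S, c w = c v := by
      intro w hw
      obtain ⟨u, hu, huw, _, _⟩ := spec w hw
      by_contra h
      exact fin2_aux (c v) (c u) (c w) (c.valid hu) (c.valid huw) (Ne.symm h)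
    have hind : isIndep G S := by
      intro a ha b hb hab
      exact c.valid hab (by rw [hcol a ha, hcol b hb])
    obtain ⟨u, huv, hins⟩ := hv S hind (by
      intro w hw
      obtain ⟨u, _, _, h2, h3⟩ := spec w hw
      exact ⟨h2, h3⟩)
    have hfu : f u ∈ S := by
      simp only [hS, Finset.mem_image, Set.mem_toFinset, mem_neighborSet]
      exact ⟨u, huv, rfl⟩
    have hufu : G.Adj u (f u) := by
      have : f u = (key u huv).choose := by simp [hf, huv]
      rw [this]; exact (key u huv).choose_spec.1
    exact hins (Finset.mem_insert_self u S) (Finset.mem_insert_of_mem hfu) hufu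
  · intro x y hyx hdom
    have hxy : G.Adj x y := ((hdom y (Or.inl rfl)).resolve_left hyx)
    have : G.neighborSet y = {x} := by
      ext w
      simp only [mem_neighborSet, Set.mem_singleton_iff]
      constructor
      · intro h
        rcases hdom w (Or.inr h) with h' | h'
        · exact h'
        · exact (fin2_aux (c x) (c y) (c w) (c.valid hxy) (c.valid h) (c.valid h')).elim
      · rintro rfl; exact hxy.symm
    rw [this, Set.ncard_singleton]
end

section
/- If v is a simplicial vertex of a graph G, then every neighbor of v is a shedding vertex of G. -/
open SimpleGraph

variable {V : Type*} [Fintype V] [DecidableEq V]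

/-- If `v` is a simplicial vertex, then every neighbor of `v` is a shedding
vertex. -/
theorem stmt10 (G : SimpleGraph V) (v : V)
    (hsimp : ∀ a b : V, (a = v ∨ G.Adj v a) → (b = v ∨ G.Adj v b) → a ≠ b →
      G.Adj a b) :
    ∀ u : V, G.Adj v u → IsShedding G u := by
  intro u hvu S hS hSu
  refine ⟨v, hvu.symm, ?_⟩
  have key : ∀ w ∈ S, ¬ G.Adj v w := by
    intro w hw hadj
    obtain ⟨hne, hnadj⟩ := hSu w hw
    exact hnadj ((hsimp u w (Or.inr hvu) (Or.inr hadj) (Ne.symm hne)))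
  intro a ha b hb hab
  rcases Finset.mem_insert.mp ha with h1 | h1 <;>
    rcases Finset.mem_insert.mp hb with h2 | h2
  · exact G.irrefl (h1 ▸ h2 ▸ hab)
  · exact key b h2 (h1 ▸ hab)
  · exact key a h1 (h2 ▸ hab).symm
  · exact hS h1 h2 hab
end

section
/- A König–Egerváry graph G has two disjoint maximum independent sets if and only if G is a bipartite graph possessing a perfect matching. -/
open SimpleGraph

variable {V : Type*} [Fintype V] [DecidableEq V]

section Aux

variable {G : SimpleGraph V}

set_option linter.unusedSectionVars false in
private lemma indepNum_bdd :
    BddAbove {n | ∃ S : Finset V, isIndep G S ∧ S.card = n} :=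
  ⟨Fintype.card V, by rintro n ⟨S, -, rfl⟩; exact S.card_le_univ⟩

private lemma card_le_indepNum {S : Finset V} (h : isIndep G S) :
    S.card ≤ _root_.indepNum G :=
  le_csSup indepNum_bdd ⟨S, h, rfl⟩

private def vset (e : Sym2 V) : Finset V := Finset.univ.filter (· ∈ e)

private lemma mem_vset {v : V} {e : Sym2 V} : v ∈ vset e ↔ v ∈ e := by
  simp [vset]

private lemma vset_card {e : Sym2 V} (he : ¬ e.IsDiag) : (vset e).card = 2 := by
  induction e using Sym2.ind with
  | _ a b =>
    have hab : a ≠ b := by simpa using he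
    have h2 : vset s(a, b) = {a, b} := by ext x; simp [vset]
    rw [h2, Finset.card_insert_of_notMem (by simp [hab]), Finset.card_singleton]

private lemma matching_two_mul {M : Finset (Sym2 V)} (hM : isMatchingF G M) :
    (M.biUnion vset).card = 2 * M.card := by
  rw [Finset.card_biUnion]
  · rw [Finset.sum_congr rfl
      (fun e he => vset_card (G.not_isDiag_of_mem_edgeSet (hM.1 e he)))]
    simp [mul_comm]
  · intro e he f hf hef
    rw [Function.onFun, Finset.disjoint_left]
    intro v hv hvf
    exact hM.2 e he f hf hef v (mem_vset.mp hv) (mem_vset.mp hvf)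

private lemma two_mul_card_le {M : Finset (Sym2 V)} (hM : isMatchingF G M) :
    2 * M.card ≤ Fintype.card V := by
  rw [← matching_two_mul hM]
  exact Finset.card_le_univ _

private lemma matchNum_bdd :
    BddAbove {n | ∃ M : Finset (Sym2 V), isMatchingF G M ∧ M.card = n} := by
  refine ⟨Fintype.card V, ?_⟩
  rintro n ⟨M, hM, rfl⟩
  have := two_mul_card_le hM
  omega

private lemma card_le_matchNum {M : Finset (Sym2 V)} (hM : isMatchingF G M) :
    M.card ≤ matchNum G :=
  le_csSup matchNum_bdd ⟨M, hM, rfl⟩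

private lemma exists_max_matching (G : SimpleGraph V) :
    ∃ M : Finset (Sym2 V), isMatchingF G M ∧ M.card = matchNum G := by
  have h0 : (0 : ℕ) ∈ {n | ∃ M : Finset (Sym2 V), isMatchingF G M ∧ M.card = n} :=
    ⟨∅, ⟨by simp, by simp⟩, by simp⟩
  exact Nat.sSup_mem ⟨0, h0⟩ matchNum_bdd

end Aux

/-- A König–Egerváry graph has two disjoint maximum independent sets iff it is
bipartite with a perfect matching. -/
theorem stmt11 (G : SimpleGraph V)
    (hKE : _root_.indepNum G + matchNum G = Fintype.card V) :
    hasTwoDisjointMaxIndep G ↔ (G.Colorable 2 ∧ hasPerfectMatchingF G) := by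
  obtain ⟨M, hM, hMc⟩ := exists_max_matching G
  have h2μ : 2 * matchNum G ≤ Fintype.card V := hMc ▸ two_mul_card_le hM
  constructor
  · rintro ⟨S₁, S₂, ⟨h1i, h1c⟩, ⟨h2i, h2c⟩, hd⟩
    have hcu : (S₁ ∪ S₂).card = S₁.card + S₂.card := Finset.card_union_of_disjoint hd
    have hle : (S₁ ∪ S₂).card ≤ Fintype.card V := Finset.card_le_univ _
    have hα : 2 * _root_.indepNum G = Fintype.card V := by omega
    have huniv : S₁ ∪ S₂ = Finset.univ :=
      Finset.eq_univ_of_card _ (by omega)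
    refine ⟨?_, M, hM, ?_⟩
    · refine ⟨Coloring.mk (fun v => if v ∈ S₁ then 0 else 1) ?_⟩
      intro a b hab
      by_cases ha : a ∈ S₁ <;> by_cases hb : b ∈ S₁
      · exact absurd hab (h1i ha hb)
      · simp [ha, hb]
      · simp [ha, hb]
      · have ha2 : a ∈ S₂ := by
          have := Finset.mem_univ a
          rw [← huniv, Finset.mem_union] at this
          tauto
        have hb2 : b ∈ S₂ := by
          have := Finset.mem_univ b
          rw [← huniv, Finset.mem_union] at this
          tauto
        exact absurd hab (h2i ha2 hb2)
    · have hbu : M.biUnion vset = Finset.univ :=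
        Finset.eq_univ_of_card _ (by rw [matching_two_mul hM, hMc]; omega)
      intro v
      have hv : v ∈ M.biUnion vset := hbu ▸ Finset.mem_univ v
      obtain ⟨e, he, hve⟩ := Finset.mem_biUnion.mp hv
      exact ⟨e, he, mem_vset.mp hve⟩
  · rintro ⟨hc, P, hP, hPM⟩
    have hPcard : 2 * P.card = Fintype.card V := by
      have hbu : P.biUnion vset = Finset.univ :=
        Finset.eq_univ_iff_forall.mpr fun v => by
          obtain ⟨e, he, hve⟩ := hPM v
          exact Finset.mem_biUnion.mpr ⟨e, he, mem_vset.mpr hve⟩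
      rw [← matching_two_mul hP, hbu, Finset.card_univ]
    have hμ1 : P.card ≤ matchNum G := card_le_matchNum hP
    have hα : 2 * _root_.indepNum G = Fintype.card V := by omega
    obtain ⟨C⟩ := hc
    set A := Finset.univ.filter (fun v => C v = 0) with hA
    set B := Finset.univ.filter (fun v => ¬ C v = 0) with hB
    have hone : ∀ x : Fin 2, x ≠ 0 → x = 1 := by decide
    have hAB : A.card + B.card = Fintype.card V :=
      Finset.card_filter_add_card_filter_not _
    have hAi : isIndep G A := by
      intro a ha b hb hab
      rw [hA, Finset.mem_filter] at ha hb
      exact C.valid hab (ha.2.trans hb.2.symm)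
    have hBi : isIndep G B := by
      intro a ha b hb hab
      rw [hB, Finset.mem_filter] at ha hb
      exact C.valid hab ((hone _ ha.2).trans (hone _ hb.2).symm)
    have hAle := card_le_indepNum hAi
    have hBle := card_le_indepNum hBi
    exact ⟨A, B, ⟨hAi, by omega⟩, ⟨hBi, by omega⟩,
      Finset.disjoint_filter_filter_not _ _ _⟩
end

section
/- Let T be a tree not isomorphic to K₂, and let S be a maximal independent set of T. Then S ⊆ Shed(T) if and only if S = Shed(T). -/
open SimpleGraph

variable {V : Type*} [Fintype V] [DecidableEq V]

section Aux
set_option linter.unusedSectionVars false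

private lemma no_c3' {T : SimpleGraph V} (hA : T.IsAcyclic) {a b c : V}
    (hab : T.Adj a b) (hbc : T.Adj b c) (hac : T.Adj a c) : False := by
  have hp1 : (Walk.cons hac Walk.nil).IsPath := by simp [hac.ne]
  have hp2 : (Walk.cons hab (Walk.cons hbc Walk.nil)).IsPath := by
    simp [hab.ne, hbc.ne, hac.ne]
  have := hA.path_unique ⟨_, hp1⟩ ⟨_, hp2⟩
  have := congrArg (fun p => p.1.length) this
  simp at this

private lemma no_c5' {T : SimpleGraph V} (hA : T.IsAcyclic) {a b c d e : V}
    (hab : T.Adj a b) (hbc : T.Adj b c) (hcd : T.Adj c d) (hde : T.Adj d e)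
    (hae : T.Adj a e) (hac : a ≠ c) (had : a ≠ d) (hbd : b ≠ d) (hbe : b ≠ e)
    (hce : c ≠ e) : False := by
  have hp1 : (Walk.cons hae Walk.nil).IsPath := by simp [hae.ne]
  have hp2 : (Walk.cons hab (Walk.cons hbc (Walk.cons hcd (Walk.cons hde Walk.nil)))).IsPath := by
    simp [hab.ne, hbc.ne, hcd.ne, hde.ne, hae.ne, hac, had, hbd, hbe, hce]
  have := hA.path_unique ⟨_, hp1⟩ ⟨_, hp2⟩
  have := congrArg (fun p => p.1.length) this
  simp at this

private lemma exists_nbr' {T : SimpleGraph V} {S : Finset V} (hS : isIndep T S)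
    (hmax : ∀ v ∉ S, ¬ isIndep T (insert v S)) {v : V} (hv : v ∉ S) :
    ∃ t ∈ S, T.Adj v t := by
  have h := hmax v hv
  unfold isIndep at h
  push_neg at h
  obtain ⟨a, ha, b, hb, hadj⟩ := h
  rcases Finset.mem_insert.1 ha with h1 | h1 <;> rcases Finset.mem_insert.1 hb with h2 | h2
  · subst h1; subst h2; exact absurd hadj T.irrefl
  · subst h1; exact ⟨b, h2, hadj⟩
  · subst h2; exact ⟨a, h1, hadj.symm⟩
  · exact absurd hadj (hS h1 h2)

/-- every shedding vertex of a tree has a leaf neighbor -/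
private lemma shed_support' {T : SimpleGraph V} (hT : T.IsTree) {v : V}
    (hv : IsShedding T v) : ∃ u, T.Adj v u ∧ ∀ x, T.Adj u x → x = v := by
  by_contra hcon
  push_neg at hcon
  have hc : ∀ u, T.Adj v u → ∃ x, T.Adj u x ∧ x ≠ v := by
    intro u hu
    obtain ⟨x, hx1, hx2⟩ := hcon u hu
    exact ⟨x, hx1, hx2⟩
  classical
  let g : V → V := fun u => if h : T.Adj v u then (hc u h).choose else v
  have hg1 : ∀ u, T.Adj v u → T.Adj u (g u) := by
    intro u h; simp only [g, dif_pos h]; exact (hc u h).choose_spec.1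
  have hg2 : ∀ u, T.Adj v u → g u ≠ v := by
    intro u h; simp only [g, dif_pos h]; exact (hc u h).choose_spec.2
  have hg3 : ∀ u, T.Adj v u → ¬ T.Adj v (g u) := by
    intro u h hadj; exact no_c3' hT.2 h (hg1 u h) hadj
  set S₀ : Finset V := (T.neighborFinset v).image g with hS₀
  have hmemS₀ : ∀ w ∈ S₀, ∃ u, T.Adj v u ∧ g u = w := by
    intro w hw
    obtain ⟨u, hu, rfl⟩ := Finset.mem_image.1 hw
    exact ⟨u, (T.mem_neighborFinset v u).1 hu, rfl⟩
  have hind : isIndep T S₀ := by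
    intro a ha b hb hadj
    obtain ⟨u, hu, rfl⟩ := hmemS₀ a ha
    obtain ⟨u', hu', rfl⟩ := hmemS₀ b hb
    by_cases huu : u = u'
    · subst huu; exact T.irrefl hadj
    · exact no_c5' hT.2 (hg1 u hu).symm hu.symm hu' (hg1 u' hu') hadj
        (hg2 u hu) (fun h => hg3 u hu (h ▸ hu')) huu
        (fun h => hg3 u' hu' (h ▸ hu))
        (Ne.symm (hg2 u' hu'))
  have hcond : ∀ w ∈ S₀, w ≠ v ∧ ¬ T.Adj v w := by
    intro w hw
    obtain ⟨u, hu, rfl⟩ := hmemS₀ w hw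
    exact ⟨hg2 u hu, hg3 u hu⟩
  obtain ⟨w, hw1, hw2⟩ := hv S₀ hind hcond
  have hgw : g w ∈ S₀ := Finset.mem_image_of_mem g ((T.mem_neighborFinset v w).2 hw1)
  exact hw2 (Finset.mem_insert_self w S₀) (Finset.mem_insert_of_mem hgw) (hg1 w hw1)

private lemma walk_two' {T : SimpleGraph V} {u v : V}
    (hu : ∀ x, T.Adj u x → x = v) (hv : ∀ x, T.Adj v x → x = u) :
    ∀ {a z : V}, T.Walk a z → (a = u ∨ a = v) → z = u ∨ z = v := by
  intro a z w
  induction w with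
  | nil => exact id
  | cons h p ih =>
    intro ha
    apply ih
    rcases ha with rfl | rfl
    · right; exact hu _ h
    · left; exact hv _ h

private lemma iso_k2' {T : SimpleGraph V} (hT : T.IsTree) {u v : V} (hadj : T.Adj u v)
    (hu : ∀ x, T.Adj u x → x = v) (hv : ∀ x, T.Adj v x → x = u) :
    Nonempty (T ≃g (⊤ : SimpleGraph (Fin 2))) := by
  have huv : u ≠ v := hadj.ne
  have hall : ∀ z : V, z = u ∨ z = v := by
    intro z
    obtain ⟨w⟩ := hT.isConnected.preconnected u z
    exact walk_two' hu hv w (Or.inl rfl)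
  refine ⟨⟨⟨fun z => if z = u then 0 else 1, fun i => if i = 0 then u else v, ?_, ?_⟩, ?_⟩⟩
  · intro z
    rcases hall z with rfl | rfl
    · simp
    · simp [Ne.symm huv, huv]
  · intro i
    fin_cases i <;> simp [huv, Ne.symm huv]
  · intro a b
    simp only [Equiv.coe_fn_mk, top_adj]
    rcases hall a with rfl | rfl <;> rcases hall b with rfl | rfl
    · simpa using T.loopless _
    · simp [huv, Ne.symm huv, hadj]
    · simp [huv, Ne.symm huv, hadj.symm]
    · simpa using T.loopless _

/-- a leaf of a tree other than K₂ is not a shedding vertex -/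
private lemma leaf_not_shed' {T : SimpleGraph V} (hT : T.IsTree)
    (hK2 : IsEmpty (T ≃g (⊤ : SimpleGraph (Fin 2)))) {u v : V}
    (hadj : T.Adj u v) (hleaf : ∀ x, T.Adj u x → x = v) : ¬ IsShedding T u := by
  intro hshed
  -- v has a neighbor other than u, else T ≅ K₂
  have hx : ∃ x, T.Adj v x ∧ x ≠ u := by
    by_contra hcon
    push_neg at hcon
    exact hK2.elim (iso_k2' hT hadj hleaf hcon).some
  obtain ⟨x, hvx, hxu⟩ := hx
  have hxv : x ≠ v := hvx.ne'
  have hnadj : ¬ T.Adj u x := by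
    intro h
    exact hxv (hleaf x h)
  have hind : isIndep T ({x} : Finset V) := by
    intro a ha b hb hadj'
    rw [Finset.mem_singleton] at ha hb
    subst ha; subst hb; exact T.irrefl hadj'
  obtain ⟨w, hw1, hw2⟩ := hshed {x} hind (by
    intro w hw
    rw [Finset.mem_singleton] at hw
    subst hw
    exact ⟨hxu, hnadj⟩)
  have : w = v := hleaf w hw1
  subst this
  exact hw2 (Finset.mem_insert_self _ _)
    (Finset.mem_insert_of_mem (Finset.mem_singleton_self x)) hvx

end Aux

/-- In a tree `T ≠ K₂`, a maximal independent set `S` satisfies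
`S ⊆ Shed(T)` iff `S = Shed(T)`. -/
theorem stmt16 (T : SimpleGraph V) (hT : T.IsTree)
    (hK2 : IsEmpty (T ≃g (⊤ : SimpleGraph (Fin 2))))
    (S : Finset V) (hS : isIndep T S)
    (hmax : ∀ v ∉ S, ¬ isIndep T (insert v S)) :
    ↑S ⊆ {v : V | IsShedding T v} ↔ ↑S = {v : V | IsShedding T v} := by
  constructor
  · intro hsub
    refine Set.Subset.antisymm hsub ?_
    intro v hv
    have hv' : IsShedding T v := hv
    obtain ⟨u, huv, hleaf⟩ := shed_support' hT hv'
    have huns : ¬ IsShedding T u := leaf_not_shed' hT hK2 huv.symm hleaf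
    have huS : u ∉ S := fun h => huns (hsub (Finset.mem_coe.2 h))
    obtain ⟨t, htS, hut⟩ := exists_nbr' hS hmax huS
    have : t = v := hleaf t hut
    subst this
    exact Finset.mem_coe.2 htS
  · intro h
    rw [h]
end
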